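/- The constant a_p = ∫_{Φ⁻¹((1−p)/2)}^{Φ⁻¹((1+p)/2)} |x| e^{−x²/2}/√(2π) dx is strictly positive for every p ∈ (0,1), and for a centered Gaussian random variable W with variance β > 0 and any event A with ℙ(A) ≥ p one has E[|W|·1_A] ≥ a_p √β. -/

import Mathlib

open MeasureTheory ProbabilityTheory

open Real Set Filter
open scoped ENNReal NNReal

/-- The standard normal cumulative distribution function Φ. -/
noncomputable def Phi (x : ℝ) : ℝ := ∫ t in Set.Iic x, gaussianPDFReal 0 1 t

lemma pdf1_int : MeasureTheory.Integrable (gaussianPDFReal 0 1) := integrable_gaussianPDFReal 0 1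

lemma pdf1_pos (x : ℝ) : 0 < gaussianPDFReal 0 1 x := gaussianPDFReal_pos 0 1 x one_ne_zero

lemma pdf1_even (x : ℝ) : gaussianPDFReal 0 1 (-x) = gaussianPDFReal 0 1 x := by
  unfold gaussianPDFReal; ring_nf

lemma Phi_add {x y : ℝ} (h : x ≤ y) :
    Phi y = Phi x + ∫ t in Set.Ioc x y, gaussianPDFReal 0 1 t := by
  rw [Phi, Phi, ← Set.Iic_union_Ioc_eq_Iic h,
    setIntegral_union (Set.Iic_disjoint_Ioc le_rfl) measurableSet_Ioc
      pdf1_int.integrableOn pdf1_int.integrableOn]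

lemma Phi_strictMono : StrictMono Phi := by
  intro x y hxy
  rw [Phi_add hxy.le, lt_add_iff_pos_right, ← intervalIntegral.integral_of_le hxy.le]
  exact intervalIntegral.intervalIntegral_pos_of_pos pdf1_int.intervalIntegrable pdf1_pos hxy

lemma Phi_primitive (x : ℝ) : Phi x = Phi 0 + ∫ t in (0:ℝ)..x, gaussianPDFReal 0 1 t := by
  rcases le_total 0 x with h | h
  · rw [Phi_add h, intervalIntegral.integral_of_le h]
  · have := Phi_add h
    rw [intervalIntegral.integral_symm, intervalIntegral.integral_of_le h]
    linarith

lemma Phi_continuous : Continuous Phi := by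
  have : Phi = fun x => Phi 0 + ∫ t in (0:ℝ)..x, gaussianPDFReal 0 1 t :=
    funext Phi_primitive
  rw [this]
  exact continuous_const.add
    (intervalIntegral.continuous_primitive (fun a b => pdf1_int.intervalIntegrable) 0)

lemma Phi_neg (x : ℝ) : Phi (-x) = 1 - Phi x := by
  have h1 : Phi (-x) = ∫ t in Set.Ioi x, gaussianPDFReal 0 1 t := by
    rw [Phi]
    rw [show (∫ t in Set.Iic (-x), gaussianPDFReal 0 1 t)
        = ∫ t in Set.Iic (-x), gaussianPDFReal 0 1 (-t) from by
      simp_rw [pdf1_even]]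
    rw [integral_comp_neg_Iic, neg_neg]
  have h2 : Phi x + ∫ t in Set.Ioi x, gaussianPDFReal 0 1 t = 1 := by
    rw [Phi, ← setIntegral_union (Set.Iic_disjoint_Ioi le_rfl) measurableSet_Ioi
      pdf1_int.integrableOn pdf1_int.integrableOn, Set.Iic_union_Ioi,
      MeasureTheory.setIntegral_univ, integral_gaussianPDFReal_eq_one 0 one_ne_zero]
  rw [h1]
  linarith

lemma Phi_zero : Phi 0 = 1 / 2 := by
  have := Phi_neg 0
  rw [neg_zero] at this
  linarith

lemma Phi_nonneg (x : ℝ) : 0 ≤ Phi x :=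
  MeasureTheory.integral_nonneg fun t => gaussianPDFReal_nonneg 0 1 t

lemma gaussian_Iic (x : ℝ) : gaussianReal 0 1 (Set.Iic x) = ENNReal.ofReal (Phi x) := by
  rw [gaussianReal_apply_eq_integral 0 one_ne_zero]; rfl

lemma Phi_tendsto_atTop : Filter.Tendsto Phi Filter.atTop (nhds 1) := by
  have h : Filter.Tendsto (fun x => gaussianReal 0 1 (Set.Iic x)) Filter.atTop
      (nhds (gaussianReal 0 1 Set.univ)) := tendsto_measure_Iic_atTop _
  rw [measure_univ] at h
  have h2 := (ENNReal.tendsto_toReal (by norm_num : (1:ENNReal) ≠ ⊤)).comp h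
  simp only [Function.comp_def, gaussian_Iic, ENNReal.toReal_ofReal (Phi_nonneg _),
    ENNReal.toReal_one] at h2
  exact h2

lemma Phi_tendsto_atBot : Filter.Tendsto Phi Filter.atBot (nhds 0) := by
  have h : Filter.Tendsto (fun x => Phi (-x)) Filter.atBot (nhds 1) :=
    Phi_tendsto_atTop.comp tendsto_neg_atBot_atTop
  simp_rw [Phi_neg] at h
  have := h.const_sub 1
  simp only [sub_sub_cancel] at this
  simpa using this

lemma Phi_surj {y : ℝ} (hy : y ∈ Set.Ioo (0:ℝ) 1) : ∃ x, Phi x = y := by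
  obtain ⟨a, ha⟩ := (Phi_tendsto_atBot.eventually_lt_const hy.1).exists
  obtain ⟨b, hb⟩ := (Phi_tendsto_atTop.eventually_const_lt hy.2).exists
  have hab : a ≤ b := (Phi_strictMono.lt_iff_lt.mp (ha.trans hb)).le
  obtain ⟨x, _, hx⟩ := intermediate_value_Icc hab Phi_continuous.continuousOn
    ⟨ha.le, hb.le⟩
  exact ⟨x, hx⟩

/-- The inverse of the standard normal CDF. -/
noncomputable def PhiInv : ℝ → ℝ := Function.invFun Phi

lemma Phi_PhiInv {y : ℝ} (hy : y ∈ Set.Ioo (0:ℝ) 1) : Phi (PhiInv y) = y :=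
  Function.invFun_eq (Phi_surj hy)

/-- The constant `a_p`. -/
noncomputable def aConst (p : ℝ) : ℝ :=
  ∫ x in PhiInv ((1 - p) / 2)..PhiInv ((1 + p) / 2),
    |x| * Real.exp (-x ^ 2 / 2) / Real.sqrt (2 * Real.pi)

section p
variable {p : ℝ} (hp : p ∈ Set.Ioo (0:ℝ) 1)
include hp

lemma half_mem : (1 + p) / 2 ∈ Set.Ioo (0:ℝ) 1 := by
  constructor <;> [linarith [hp.1]; linarith [hp.2]]

lemma half_mem' : (1 - p) / 2 ∈ Set.Ioo (0:ℝ) 1 := by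
  constructor <;> [linarith [hp.2]; linarith [hp.1]]

lemma q_pos : 0 < PhiInv ((1 + p) / 2) := by
  have h := Phi_PhiInv (half_mem hp)
  have : Phi 0 < Phi (PhiInv ((1 + p) / 2)) := by rw [Phi_zero, h]; linarith [hp.1]
  exact Phi_strictMono.lt_iff_lt.mp this

lemma q_neg : PhiInv ((1 - p) / 2) = -PhiInv ((1 + p) / 2) := by
  apply Phi_strictMono.injective
  rw [Phi_PhiInv (half_mem' hp), Phi_neg, Phi_PhiInv (half_mem hp)]
  ring

omit hp in lemma integrand_cont : Continuous fun x : ℝ =>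
    |x| * Real.exp (-x ^ 2 / 2) / Real.sqrt (2 * Real.pi) := by
  fun_prop

lemma aConst_pos : 0 < aConst p := by
  set q := PhiInv ((1 + p) / 2) with hq
  have hq0 : 0 < q := q_pos hp
  have hint : ∀ a b : ℝ, IntervalIntegrable
      (fun x : ℝ => |x| * Real.exp (-x ^ 2 / 2) / Real.sqrt (2 * Real.pi)) volume a b :=
    fun a b => integrand_cont.intervalIntegrable a b
  rw [aConst, q_neg hp]
  rw [← intervalIntegral.integral_add_adjacent_intervals (b := q / 2) (hint _ _) (hint _ _)]
  have h1 : 0 ≤ ∫ x in (-q)..(q/2), |x| * Real.exp (-x ^ 2 / 2) / Real.sqrt (2 * Real.pi) := by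
    apply intervalIntegral.integral_nonneg (by linarith)
    intro x _
    positivity
  have h2 : 0 < ∫ x in (q/2)..q, |x| * Real.exp (-x ^ 2 / 2) / Real.sqrt (2 * Real.pi) := by
    apply intervalIntegral.intervalIntegral_pos_of_pos_on (hint _ _) _ (by linarith)
    intro x hx
    have : 0 < x := by nlinarith [hx.1]
    have : 0 < |x| := abs_pos.mpr this.ne'
    positivity
  linarith

end p

lemma gauss1_withDensity : gaussianReal 0 1
    = volume.withDensity (fun x => ((gaussianPDFReal 0 1 x).toNNReal : ℝ≥0∞)) := by
  rw [gaussianReal_of_var_ne_zero _ one_ne_zero]; rfl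

lemma integrable_pdf_abs : MeasureTheory.Integrable
    (fun x : ℝ => gaussianPDFReal 0 1 x * |x|) := by
  have h := (integrable_rpow_mul_exp_neg_mul_sq (by norm_num : (0:ℝ) < 1/2)
    (by norm_num : (-1:ℝ) < 1)).abs
  have h2 := h.const_mul (Real.sqrt (2 * Real.pi))⁻¹
  apply h2.congr
  filter_upwards with x
  rw [abs_mul, Real.rpow_one, Real.abs_exp]
  unfold gaussianPDFReal
  push_cast
  rw [mul_one, sub_zero]
  ring_nf

lemma integrable_abs_gauss1 : MeasureTheory.Integrable (fun x : ℝ => |x|) (gaussianReal 0 1) := by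
  rw [gauss1_withDensity]
  rw [integrable_withDensity_iff_integrable_smul₀
    (measurable_gaussianPDFReal 0 1).real_toNNReal.aemeasurable]
  apply integrable_pdf_abs.congr
  filter_upwards with x
  rw [NNReal.smul_def, smul_eq_mul, Real.coe_toNNReal _ (gaussianPDFReal_nonneg 0 1 x)]

section beta
variable {β : ℝ} (hβ : 0 < β)
include hβ

lemma map_sqrt : (gaussianReal 0 1).map (Real.sqrt β * ·) = gaussianReal 0 β.toNNReal := by
  rw [gaussianReal_map_const_mul]
  congr 1
  · ring
  · ext
    push_cast
    rw [Real.sq_sqrt hβ.le, mul_one, Real.coe_toNNReal _ hβ.le]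

end beta

section pq
variable {p : ℝ} (hp : p ∈ Set.Ioo (0:ℝ) 1)
include hp

lemma gauss1_Icc : gaussianReal 0 1
    (Set.Icc (-(PhiInv ((1+p)/2))) (PhiInv ((1+p)/2))) = ENNReal.ofReal p := by
  set q := PhiInv ((1+p)/2) with hqdef
  have hq0 : 0 < q := q_pos hp
  rw [gaussianReal_apply_eq_integral 0 one_ne_zero]
  congr 1
  rw [MeasureTheory.integral_Icc_eq_integral_Ioc]
  have := Phi_add (show -q ≤ q by linarith)
  have hPq : Phi q = (1+p)/2 := Phi_PhiInv (half_mem hp)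
  have hPnq : Phi (-q) = (1-p)/2 := by rw [Phi_neg, hPq]; ring
  rw [hPq, hPnq] at this
  linarith

lemma gauss1_int_Icc : (∫ x in Set.Icc (-(PhiInv ((1+p)/2))) (PhiInv ((1+p)/2)),
    |x| ∂(gaussianReal 0 1)) = aConst p := by
  set q := PhiInv ((1+p)/2) with hqdef
  have hq0 : 0 < q := q_pos hp
  rw [gauss1_withDensity, setIntegral_withDensity_eq_setIntegral_smul₀
    ((measurable_gaussianPDFReal 0 1).real_toNNReal.aemeasurable.restrict) _ measurableSet_Icc]
  rw [aConst, q_neg hp, intervalIntegral.integral_of_le (by linarith : -q ≤ q),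
    ← MeasureTheory.integral_Icc_eq_integral_Ioc]
  apply setIntegral_congr_fun measurableSet_Icc
  intro x _
  simp only [NNReal.smul_def, smul_eq_mul, Real.coe_toNNReal _ (gaussianPDFReal_nonneg 0 1 x)]
  unfold gaussianPDFReal
  push_cast
  rw [mul_one, sub_zero]
  ring_nf

end pq

theorem stmt_11 (p : ℝ) (hp : p ∈ Set.Ioo (0 : ℝ) 1) :
    0 < aConst p ∧
    ∀ {Ω : Type} {mΩ : MeasurableSpace Ω} (μ : Measure Ω) [IsProbabilityMeasure μ]
      (β : ℝ) (hβ : 0 < β) (W : Ω → ℝ),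
      Measure.map W μ = gaussianReal 0 β.toNNReal →
      ∀ A : Set Ω, MeasurableSet A → ENNReal.ofReal p ≤ μ A →
        aConst p * Real.sqrt β ≤ ∫ ω in A, |W ω| ∂μ := by
  refine ⟨aConst_pos hp, ?_⟩
  intro Ω mΩ μ _ β hβ W hW A hA hpA
  set q := PhiInv ((1+p)/2) with hqdef
  have hq0 : 0 < q := q_pos hp
  have hsβ : 0 < Real.sqrt β := Real.sqrt_pos.mpr hβ
  set c := Real.sqrt β * q with hc
  have hc0 : 0 < c := mul_pos hsβ hq0
  have hWae : AEMeasurable W μ := by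
    by_contra h
    rw [Measure.map_of_not_aemeasurable h] at hW
    have := congrArg (fun m : Measure ℝ => m Set.univ) hW
    simp [measure_univ] at this
  set W' := hWae.mk W with hW'def
  have hW'meas : Measurable W' := hWae.measurable_mk
  have hWW' : W =ᵐ[μ] W' := hWae.ae_eq_mk
  have hmap : Measure.map W' μ = gaussianReal 0 β.toNNReal := by
    rw [← Measure.map_congr hWW', hW]
  have hpre : (Real.sqrt β * ·) ⁻¹' (Set.Icc (-c) c) = Set.Icc (-q) q := by
    ext u
    simp only [Set.mem_preimage, Set.mem_Icc, hc]
    rw [show -(Real.sqrt β * q) = Real.sqrt β * (-q) by ring, mul_le_mul_iff_of_pos_left hsβ,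
      mul_le_mul_iff_of_pos_left hsβ]
  have hγIcc : gaussianReal 0 β.toNNReal (Set.Icc (-c) c) = ENNReal.ofReal p := by
    rw [← map_sqrt hβ, Measure.map_apply (measurable_const_mul _) measurableSet_Icc, hpre,
      gauss1_Icc hp]
  have hγint : (∫ x in Set.Icc (-c) c, |x| ∂(gaussianReal 0 β.toNNReal))
      = Real.sqrt β * aConst p := by
    rw [← map_sqrt hβ, setIntegral_map measurableSet_Icc continuous_abs.aestronglyMeasurable
      (measurable_const_mul _).aemeasurable, hpre]
    simp_rw [abs_mul, abs_of_pos hsβ]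
    rw [MeasureTheory.integral_const_mul, gauss1_int_Icc hp]
  have hγabs : MeasureTheory.Integrable (fun x : ℝ => |x|) (gaussianReal 0 β.toNNReal) := by
    rw [← map_sqrt hβ, integrable_map_measure continuous_abs.aestronglyMeasurable
      (measurable_const_mul _).aemeasurable]
    have := (integrable_abs_gauss1.const_mul (Real.sqrt β))
    apply this.congr
    filter_upwards with x
    simp [Function.comp, abs_mul, abs_of_pos hsβ]
  set B := W' ⁻¹' (Set.Icc (-c) c) with hB
  have hBmeas : MeasurableSet B := hW'meas measurableSet_Icc
  have hμB : μ B = ENNReal.ofReal p := by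
    rw [hB, ← Measure.map_apply hW'meas measurableSet_Icc, hmap, hγIcc]
  have hgint : MeasureTheory.Integrable (fun ω => |W' ω|) μ := by
    have h := (integrable_map_measure continuous_abs.aestronglyMeasurable
      hW'meas.aemeasurable).mp (hmap ▸ hγabs)
    exact h
  have hBint : ∫ ω in B, |W' ω| ∂μ = Real.sqrt β * aConst p := by
    rw [hB, ← setIntegral_map measurableSet_Icc continuous_abs.aestronglyMeasurable
      hW'meas.aemeasurable, hmap, hγint]
  -- bathtub
  have hABdiff : μ (B \ A) ≤ μ (A \ B) := by
    have h1 : μ (B \ A) + μ (B ∩ A) = μ B := measure_diff_add_inter B hA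
    have h2 : μ (A \ B) + μ (A ∩ B) = μ A := measure_diff_add_inter A hBmeas
    rw [Set.inter_comm] at h1
    have hle : μ (B \ A) + μ (A ∩ B) ≤ μ (A \ B) + μ (A ∩ B) := by
      rw [h1, h2, hμB]; exact hpA
    exact (ENNReal.add_le_add_iff_right (measure_ne_top μ _)).mp hle
  have key1 : ∫ ω in B \ A, |W' ω| ∂μ ≤ c * (μ (B \ A)).toReal := by
    have h := setIntegral_mono_on hgint.integrableOn
      (integrableOn_const (C := c) (measure_ne_top μ _))
      (hBmeas.diff hA) (fun x hx => by
        have : W' x ∈ Set.Icc (-c) c := hx.1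
        rw [Set.mem_Icc, ← abs_le] at this
        exact this)
    rw [setIntegral_const, smul_eq_mul, mul_comm, measureReal_def] at h
    exact h
  have key2 : c * (μ (A \ B)).toReal ≤ ∫ ω in A \ B, |W' ω| ∂μ := by
    rw [mul_comm, ← measureReal_def, ← smul_eq_mul]
    apply setIntegral_ge_of_const_le (hA.diff hBmeas) (measure_ne_top μ _)
      (fun x hx => ?_) hgint.integrableOn
    have : W' x ∉ Set.Icc (-c) c := hx.2
    rw [Set.mem_Icc, ← abs_le] at this
    linarith [not_le.mp this]
  have hmono : c * (μ (B \ A)).toReal ≤ c * (μ (A \ B)).toReal :=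
    mul_le_mul_of_nonneg_left (ENNReal.toReal_mono (measure_ne_top μ _) hABdiff) hc0.le
  have splitA : ∫ ω in A, |W' ω| ∂μ
      = (∫ ω in A \ B, |W' ω| ∂μ) + ∫ ω in A ∩ B, |W' ω| ∂μ := by
    rw [← setIntegral_union Set.disjoint_sdiff_inter (hA.inter hBmeas)
      hgint.integrableOn hgint.integrableOn, Set.diff_union_inter]
  have splitB : ∫ ω in B, |W' ω| ∂μ
      = (∫ ω in B \ A, |W' ω| ∂μ) + ∫ ω in A ∩ B, |W' ω| ∂μ := by
    rw [show A ∩ B = B ∩ A from Set.inter_comm A B,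
      ← setIntegral_union Set.disjoint_sdiff_inter (hBmeas.inter hA)
      hgint.integrableOn hgint.integrableOn, Set.diff_union_inter]
  have hAeq : ∫ ω in A, |W ω| ∂μ = ∫ ω in A, |W' ω| ∂μ :=
    setIntegral_congr_ae hA (hWW'.mono fun ω h _ => by rw [h])
  rw [hAeq, mul_comm]
  rw [← hBint]
  linarith
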